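/- arXiv:2007.10408 — 3 statements merged into one kernel-verified Lean document; each statement's English description precedes it below -/
import Mathlib

section
/- Theorem 1, equation (e2): Let n ≥ 1, d ≥ 0. Let e : ℝⁿ × O(n) → ℝ be a feature map such that e(·, C) is d times continuously differentiable for every C ∈ O(n). Let ν be a measure on O(n) and, for each B ∈ O(n), let β_B be a family of coefficients defining a transformed differential operator χ_B^{(A)}. Define Φ[e](x, A) = ∫_{O(n)} χ_B^{(A)}[e(·, A B)](x) dν(B). Then for every orthogonal matrix Ã, every x ∈ ℝⁿ and every A ∈ O(n), Φ[π_Ã[e]](x, A) = Φ[e](Ã⁻¹x, Ã⁻¹A), where (π_Ã[e])(x, C) = e(Ã⁻¹x, Ã⁻¹C); i.e. Φ is equivariant under orthogonal transformations. -/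
/-- Action of an `n × n` real matrix on `ℝⁿ` (with the Euclidean norm) by
matrix-vector multiplication. -/
noncomputable def mact {n : ℕ} (A : Matrix (Fin n) (Fin n) ℝ) :
    EuclideanSpace ℝ (Fin n) →ₗ[ℝ] EuclideanSpace ℝ (Fin n) :=
  Matrix.toEuclideanLin A

/-- The list of direction vectors `A e₁` repeated `m 1` times, ..., `A eₙ` repeated
`m n` times, as a function on `Fin (∑ i, m i)` (block `i` consists of copies of `A eᵢ`). -/
noncomputable def dirs {n : ℕ} (A : Matrix (Fin n) (Fin n) ℝ) (m : Fin n → ℕ)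
    (j : Fin (∑ i, m i)) : EuclideanSpace ℝ (Fin n) :=
  (((List.finRange n).flatMap fun i =>
      List.replicate (m i) (mact A (EuclideanSpace.single i 1)))).getD j 0

/-- The transformed differential operator
`χ^{(A)}[r](x) = ∑_{|m| ≤ d} β_m · D^{|m|} r(x)[A e₁ repeated m₁ times, …, A eₙ repeated mₙ times]`,
where multi-indices `m ∈ ℕⁿ` with `|m| ≤ d` (hence each entry `≤ d`) are encoded as
functions `Fin n → Fin (d+1)`. -/
noncomputable def chi {n d : ℕ} (β : (Fin n → Fin (d+1)) → ℝ)
    (A : Matrix (Fin n) (Fin n) ℝ)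
    (r : EuclideanSpace ℝ (Fin n) → ℝ) (x : EuclideanSpace ℝ (Fin n)) : ℝ :=
  ∑ m : Fin n → Fin (d+1),
    if (∑ i, (m i : ℕ)) ≤ d then
      β m * iteratedFDeriv ℝ (∑ i, (m i : ℕ)) r x (dirs A fun i => (m i : ℕ))
    else 0

open MeasureTheory

/-- The orthogonal group `O(n)` is a (compact) topological group; we equip it with its
Borel σ-algebra so that measures `ν` on it make sense. -/
noncomputable instance {n : ℕ} : MeasurableSpace ↥(Matrix.orthogonalGroup (Fin n) ℝ) :=
  borel _

/-- The layer `Φ[e](x, A) = ∫_{O(n)} χ_B^{(A)}[e(·, A B)](x) dν(B)`, where for each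
`B ∈ O(n)` the coefficients `β B` define the transformed operator `χ_B^{(A)}`. -/
noncomputable def Phi {n d : ℕ}
    (β : Matrix.orthogonalGroup (Fin n) ℝ → (Fin n → Fin (d+1)) → ℝ)
    (ν : Measure (Matrix.orthogonalGroup (Fin n) ℝ))
    (e : EuclideanSpace ℝ (Fin n) → Matrix.orthogonalGroup (Fin n) ℝ → ℝ)
    (x : EuclideanSpace ℝ (Fin n)) (A : Matrix.orthogonalGroup (Fin n) ℝ) : ℝ :=
  ∫ B, chi (β B) (↑A) (fun y => e y (A * B)) x ∂ν


lemma mact_mact {n : ℕ} (M N : Matrix (Fin n) (Fin n) ℝ) (v : EuclideanSpace ℝ (Fin n)) :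
    mact M (mact N v) = mact (M * N) v := by
  simp [mact, Matrix.toEuclideanLin_apply, Matrix.mulVec_mulVec]

lemma mact_dirs {n : ℕ} (M A : Matrix (Fin n) (Fin n) ℝ) (m : Fin n → ℕ)
    (j : Fin (∑ i, m i)) : mact M (dirs A m j) = dirs (M * A) m j := by
  unfold dirs
  have h1 : ((List.finRange n).flatMap fun i =>
      List.replicate (m i) (mact (M * A) (EuclideanSpace.single i 1)))
      = ((List.finRange n).flatMap fun i =>
      List.replicate (m i) (mact A (EuclideanSpace.single i 1))).map (mact M) := by
    rw [List.map_flatMap]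
    congr 1
    funext i
    rw [List.map_replicate, mact_mact]
  rw [h1]
  have h0 : (0 : EuclideanSpace ℝ (Fin n)) = mact M 0 := (map_zero _).symm
  conv_rhs => rw [h0]
  rw [List.getD_map]


/-- Theorem 1, equation (e2): for a feature map `e : ℝⁿ × O(n) → ℝ`
with `e(·, C)` `d` times continuously differentiable for every `C`, the layer `Φ`
satisfies `Φ[π_Ã[e]](x, A) = Φ[e](Ã⁻¹x, Ã⁻¹A)`, where
`(π_Ã[e])(x, C) = e(Ã⁻¹x, Ã⁻¹C)`. -/
theorem Phi_orthogonal_equivariance {n d : ℕ} (hn : 1 ≤ n)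
    (e : EuclideanSpace ℝ (Fin n) → Matrix.orthogonalGroup (Fin n) ℝ → ℝ)
    (he : ∀ C, ContDiff ℝ (d : ℕ∞) (fun x => e x C))
    (β : Matrix.orthogonalGroup (Fin n) ℝ → (Fin n → Fin (d+1)) → ℝ)
    (ν : Measure (Matrix.orthogonalGroup (Fin n) ℝ))
    (Atil : Matrix.orthogonalGroup (Fin n) ℝ)
    (x : EuclideanSpace ℝ (Fin n)) (A : Matrix.orthogonalGroup (Fin n) ℝ) :
    Phi β ν (fun y C => e (mact (↑(Atil⁻¹)) y) (Atil⁻¹ * C)) x A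
      = Phi β ν e (mact (↑(Atil⁻¹)) x) (Atil⁻¹ * A) := by
  unfold Phi
  refine integral_congr_ae (Filter.Eventually.of_forall fun B => ?_)
  have hC : Atil⁻¹ * (A * B) = Atil⁻¹ * A * B := (mul_assoc _ _ _).symm
  unfold chi
  refine Finset.sum_congr rfl fun m _ => ?_
  split_ifs with h
  · congr 1
    set C := Atil⁻¹ * A * B with hCdef
    have hfun : (fun y => e (mact (↑(Atil⁻¹)) y) (Atil⁻¹ * (A * B)))
        = (fun y => e y C) ∘ (LinearMap.toContinuousLinearMap (mact (↑(Atil⁻¹) : Matrix (Fin n) (Fin n) ℝ))) := by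
      funext y
      simp [hC, Function.comp]
    rw [hfun]
    rw [ContinuousLinearMap.iteratedFDeriv_comp_right _ (he C) x (by exact_mod_cast h)]
    rw [ContinuousMultilinearMap.compContinuousLinearMap_apply]
    congr 1
    funext j
    have : ((LinearMap.toContinuousLinearMap (mact (↑(Atil⁻¹) : Matrix (Fin n) (Fin n) ℝ)))
        (dirs (↑A) (fun i => (m i : ℕ)) j)) = mact (↑(Atil⁻¹)) (dirs (↑A) (fun i => (m i : ℕ)) j) := rfl
    rw [this, mact_dirs]
    congr 1
  · rfl
end

section
/- Equation (8), the finite-subgroup version of Theorem 1: Let n ≥ 1, d ≥ 0, and let S be a finite subgroup of O(n). Let ẽ : ℝⁿ × S → ℝ be a feature map such that ẽ(·, C) is d times continuously differentiable for every C ∈ S, and for each B ∈ S let β_B be coefficients defining a transformed differential operator χ_B^{(A)}. Define Φ^S[ẽ](x, A) = Σ_{B ∈ S} χ_B^{(A)}[ẽ(·, A B)](x) for A ∈ S. Then for every Ã ∈ S, every x ∈ ℝⁿ and every A ∈ S, Φ^S[π_Ã[ẽ]](x, A) = Φ^S[ẽ](Ã⁻¹x, Ã⁻¹A), where (π_Ã[ẽ])(x,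 C) = ẽ(Ã⁻¹x, Ã⁻¹C). -/
/-- The matrix underlying an element of a subgroup `S ≤ O(n)`. -/
noncomputable def matS {n : ℕ} {S : Subgroup ↥(Matrix.orthogonalGroup (Fin n) ℝ)}
    (A : S) : Matrix (Fin n) (Fin n) ℝ :=
  ((A : ↥(Matrix.orthogonalGroup (Fin n) ℝ)) : Matrix (Fin n) (Fin n) ℝ)

/-- The layer `Φ^S[ẽ](x, A) = ∑_{B ∈ S} χ_B^{(A)}[ẽ(·, A B)](x)` for a finite
subgroup `S` of `O(n)`, where for each `B ∈ S` the coefficients `β B` define the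
transformed operator `χ_B^{(A)}`. -/
noncomputable def PhiS {n d : ℕ} (S : Subgroup ↥(Matrix.orthogonalGroup (Fin n) ℝ))
    [Fintype S] (β : S → (Fin n → Fin (d+1)) → ℝ)
    (e : EuclideanSpace ℝ (Fin n) → S → ℝ)
    (x : EuclideanSpace ℝ (Fin n)) (A : S) : ℝ :=
  ∑ B : S, chi (β B) (matS A) (fun y => e y (A * B)) x

lemma mact_mul {n : ℕ} (M A : Matrix (Fin n) (Fin n) ℝ) (v : EuclideanSpace ℝ (Fin n)) :
    mact (M * A) v = mact M (mact A v) := by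
  simp [mact, Matrix.toEuclideanLin_apply, Matrix.mulVec_mulVec]

lemma dirs_mul {n : ℕ} (M A : Matrix (Fin n) (Fin n) ℝ) (m : Fin n → ℕ)
    (j : Fin (∑ i, m i)) : dirs (M * A) m j = mact M (dirs A m j) := by
  have h0 : mact M (0 : EuclideanSpace ℝ (Fin n)) = 0 := map_zero _
  unfold dirs
  have key : ((List.finRange n).flatMap fun i =>
        List.replicate (m i) (mact (M * A) (EuclideanSpace.single i 1)))
      = List.map (mact M) ((List.finRange n).flatMap fun i =>
        List.replicate (m i) (mact A (EuclideanSpace.single i 1))) := by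
    rw [List.map_flatMap]
    congr 1
    funext i
    rw [List.map_replicate, mact_mul]
  rw [key]
  calc (List.map (⇑(mact M)) ((List.finRange n).flatMap fun i =>
          List.replicate (m i) ((mact A) (EuclideanSpace.single i 1)))).getD (↑j) 0
      = (List.map (⇑(mact M)) ((List.finRange n).flatMap fun i =>
          List.replicate (m i) ((mact A) (EuclideanSpace.single i 1)))).getD (↑j)
          (mact M 0) := by rw [h0]
    _ = _ := List.getD_map _ _ _

/-- `mact M` as a continuous linear map. -/
noncomputable def mactCLM {n : ℕ} (M : Matrix (Fin n) (Fin n) ℝ) :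
    EuclideanSpace ℝ (Fin n) →L[ℝ] EuclideanSpace ℝ (Fin n) :=
  LinearMap.toContinuousLinearMap (mact M)

lemma chi_comp {n d : ℕ} (β : (Fin n → Fin (d+1)) → ℝ)
    (M A : Matrix (Fin n) (Fin n) ℝ)
    (f : EuclideanSpace ℝ (Fin n) → ℝ) (hf : ContDiff ℝ (d : ℕ∞) f)
    (x : EuclideanSpace ℝ (Fin n)) :
    chi β A (fun y => f (mact M y)) x = chi β (M * A) f (mact M x) := by
  unfold chi
  refine Finset.sum_congr rfl fun m _ => ?_
  split_ifs with hm
  · congr 1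
    have hcomp : (fun y => f (mact M y)) = f ∘ (mactCLM M) := rfl
    have hx : (mactCLM M) x = mact M x := rfl
    rw [hcomp, (mactCLM M).iteratedFDeriv_comp_right hf x (by exact_mod_cast hm), hx,
      ContinuousMultilinearMap.compContinuousLinearMap_apply]
    congr 1
    funext j
    exact (dirs_mul M A _ j).symm
  · rfl

/-- equation (8), finite-subgroup version of Theorem 1: for a finite
subgroup `S ≤ O(n)` and a feature map `ẽ : ℝⁿ × S → ℝ` with every `ẽ(·, C)` `d` times
continuously differentiable, `Φ^S[π_Ã[ẽ]](x, A) = Φ^S[ẽ](Ã⁻¹x, Ã⁻¹A)`, where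
`(π_Ã[ẽ])(x, C) = ẽ(Ã⁻¹x, Ã⁻¹C)`. -/
theorem PhiS_equivariance {n d : ℕ} (hn : 1 ≤ n)
    (S : Subgroup ↥(Matrix.orthogonalGroup (Fin n) ℝ)) [Fintype S]
    (e : EuclideanSpace ℝ (Fin n) → S → ℝ)
    (he : ∀ C : S, ContDiff ℝ (d : ℕ∞) (fun x => e x C))
    (β : S → (Fin n → Fin (d+1)) → ℝ)
    (Atil : S) (x : EuclideanSpace ℝ (Fin n)) (A : S) :
    PhiS S β (fun y C => e (mact (matS Atil⁻¹) y) (Atil⁻¹ * C)) x A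
      = PhiS S β e (mact (matS Atil⁻¹) x) (Atil⁻¹ * A) := by
  unfold PhiS
  refine Finset.sum_congr rfl fun B _ => ?_
  have hmat : matS (Atil⁻¹ * A) = matS Atil⁻¹ * matS A := rfl
  rw [hmat, ← chi_comp (β B) (matS Atil⁻¹) (matS A) _ (he _) x]
  congr 1
  funext y
  rw [mul_assoc]
end

section
/- Quadratic precision of the 5×5 stencil ũ_xxxy: There exists an absolute constant C > 0 such that the following holds. Let r : ℝ² → ℝ be six times continuously differentiable with ‖D⁶r(z)‖ ≤ M (operator norm of the sixth iterated Fréchet derivative) for all z ∈ ℝ². Then for every (x, y) ∈ ℝ² and every h > 0, |(1/(2h⁴))·[(−(1/2)r(x−2h, y+h) + r(x−h, y+h) − r(x+h, y+h) + (1/2)r(x+2h, y+h)) − (−(1/2)r(x−2h, y−h) + r(x−h, y−h) − r(x+h, y−h) + (1/2)r(x+2h, y−h))] − ∂⁴r/∂x³∂y(x, y)| ≤ C·M·h². -/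
/-- The point `(a, b)` of the Euclidean plane `ℝ²`. -/
noncomputable def pt2 (a b : ℝ) : EuclideanSpace ℝ (Fin 2) := WithLp.toLp 2 ![a, b]

/-- The first standard basis vector `e₁` of `ℝ²`. -/
noncomputable def e1 : EuclideanSpace ℝ (Fin 2) := EuclideanSpace.single 0 1

/-- The second standard basis vector `e₂` of `ℝ²`. -/
noncomputable def e2 : EuclideanSpace ℝ (Fin 2) := EuclideanSpace.single 1 1

open Set Finset

abbrev E2 := EuclideanSpace ℝ (Fin 2)

lemma norm_e1 : ‖e1‖ = 1 := by simp [e1, EuclideanSpace.norm_single]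
lemma norm_e2 : ‖e2‖ = 1 := by simp [e2, EuclideanSpace.norm_single]

lemma pt2_add (x y a b : ℝ) : pt2 (x + a) (y + b) = pt2 x y + a • e1 + b • e2 := by
  ext i
  fin_cases i <;>
    simp [pt2, e1, e2, EuclideanSpace.single_apply, PiLp.add_apply, PiLp.smul_apply]

lemma iDW_eq {f : ℝ → ℝ} {N k : ℕ} (hf : ContDiff ℝ (N : WithTop ℕ∞) f) (hk : k ≤ N) {a b x : ℝ}
    (hab : a < b) (hx : x ∈ Set.Icc a b) :
    iteratedDerivWithin k f (Set.Icc a b) x = iteratedDeriv k f x := by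
  rw [iteratedDerivWithin_eq_iteratedFDerivWithin, iteratedDeriv_eq_iteratedFDeriv]
  have hf' : ContDiff ℝ ((N : ℕ∞) : WithTop ℕ∞) f := by exact_mod_cast hf
  have h := (contDiff_iff_ftaylorSeries.mp hf').hasFTaylorSeriesUpToOn (Set.Icc a b)
  have h2 := h.eq_iteratedFDerivWithin_of_uniqueDiffOn (m := k) (by exact_mod_cast hk)
    (uniqueDiffOn_Icc hab) hx
  rw [← h2]; rfl

lemma taylor_bound_nonneg {f : ℝ → ℝ} {K : ℝ} {n : ℕ}
    (hphi : ContDiff ℝ ((n+1 : ℕ) : WithTop ℕ∞) f)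
    (hK : ∀ t : ℝ, |iteratedDeriv (n+1) f t| ≤ K) {c : ℝ} (hc : 0 ≤ c) :
    |f c - ∑ k ∈ Finset.range (n+1), c ^ k / (Nat.factorial k : ℝ) * iteratedDeriv k f 0|
      ≤ K * c ^ (n+1) / (Nat.factorial n : ℝ) := by
  rcases eq_or_lt_of_le hc with h0 | h0
  · have hK0 : 0 ≤ K := le_trans (abs_nonneg _) (hK 0)
    rw [← h0]
    rw [Finset.sum_range_succ']
    simp [Nat.factorial]
  · have hcd : ContDiffOn ℝ ((n : WithTop ℕ∞) + 1) f (Set.Icc 0 c) := by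
      exact_mod_cast hphi.contDiffOn
    have hb := taylor_mean_remainder_bound (f := f) (a := 0) (b := c) (x := c) (n := n)
      hc hcd (right_mem_Icc.mpr hc) (fun y hy => by
        rw [iDW_eq hphi le_rfl h0 hy, Real.norm_eq_abs]; exact hK y)
    rw [taylor_within_apply] at hb
    have hsum : ∑ k ∈ Finset.range (n+1),
          (((Nat.factorial k : ℝ))⁻¹ * (c - 0) ^ k) • iteratedDerivWithin k f (Set.Icc 0 c) 0
        = ∑ k ∈ Finset.range (n+1), c ^ k / (Nat.factorial k : ℝ) * iteratedDeriv k f 0 := by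
      refine Finset.sum_congr rfl fun k hk => ?_
      rw [iDW_eq hphi (Finset.mem_range.mp hk).le h0 (left_mem_Icc.mpr hc)]
      rw [smul_eq_mul]; ring
    rw [hsum] at hb
    calc |f c - _| ≤ K * (c - 0) ^ (n+1) / (Nat.factorial n : ℝ) := hb
      _ = K * c ^ (n+1) / (Nat.factorial n : ℝ) := by ring

lemma taylor_bound {f : ℝ → ℝ} {K : ℝ} {n : ℕ}
    (hphi : ContDiff ℝ ((n+1 : ℕ) : WithTop ℕ∞) f)
    (hK : ∀ t : ℝ, |iteratedDeriv (n+1) f t| ≤ K) (c : ℝ) :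
    |f c - ∑ k ∈ Finset.range (n+1), c ^ k / (Nat.factorial k : ℝ) * iteratedDeriv k f 0|
      ≤ K * |c| ^ (n+1) / (Nat.factorial n : ℝ) := by
  rcases le_or_gt 0 c with hc | hc
  · rw [abs_of_nonneg hc]; exact taylor_bound_nonneg hphi hK hc
  · have hpsi : ContDiff ℝ ((n+1 : ℕ) : WithTop ℕ∞) (fun t => f (-t)) :=
      hphi.comp contDiff_neg
    have hKpsi : ∀ t : ℝ, |iteratedDeriv (n+1) (fun t => f (-t)) t| ≤ K := fun t => by
      rw [iteratedDeriv_comp_neg]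
      rw [smul_eq_mul, abs_mul, abs_pow, abs_neg, abs_one, one_pow, one_mul]
      exact hK (-t)
    have hb := taylor_bound_nonneg hpsi hKpsi (c := -c) (by linarith)
    have e2' : ∑ k ∈ Finset.range (n+1),
          (-c) ^ k / (Nat.factorial k : ℝ) * iteratedDeriv k (fun t => f (-t)) 0
        = ∑ k ∈ Finset.range (n+1), c ^ k / (Nat.factorial k : ℝ) * iteratedDeriv k f 0 := by
      refine Finset.sum_congr rfl fun k hk => ?_
      rw [iteratedDeriv_comp_neg, neg_zero, smul_eq_mul]
      rw [show (-c) ^ k / (Nat.factorial k : ℝ) * ((-1:ℝ) ^ k * iteratedDeriv k f 0)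
            = ((-c) * (-1)) ^ k / (Nat.factorial k : ℝ) * iteratedDeriv k f 0 by
            rw [mul_pow]; ring]
      norm_num
    rw [neg_neg] at hb
    rw [e2'] at hb
    rw [abs_of_neg hc]
    exact hb

lemma slice_contDiff {r : E2 → ℝ} (hr : ContDiff ℝ 6 r) {k n : ℕ} (h : n + k ≤ 6)
    (m : Fin k → E2) (p v : E2) :
    ContDiff ℝ (n : WithTop ℕ∞) (fun s : ℝ => iteratedFDeriv ℝ k r (p + s • v) m) := by
  have h1 : ContDiff ℝ (n : WithTop ℕ∞) (iteratedFDeriv ℝ k r) :=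
    hr.iteratedFDeriv_right (by exact_mod_cast h)
  have h2 : ContDiff ℝ (n : WithTop ℕ∞) (fun s : ℝ => p + s • v) :=
    contDiff_const.add (contDiff_id.smul contDiff_const)
  exact (ContinuousMultilinearMap.apply ℝ (fun _ : Fin k => E2) ℝ m).contDiff.comp (h1.comp h2)

lemma slice_deriv {r : E2 → ℝ} (hr : ContDiff ℝ 6 r) {k : ℕ} (hk : k + 1 ≤ 6)
    (m : Fin k → E2) (p v : E2) (s : ℝ) :
    deriv (fun s : ℝ => iteratedFDeriv ℝ k r (p + s • v) m) s
      = iteratedFDeriv ℝ (k + 1) r (p + s • v) (Fin.cons v m) := by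
  have hdiff : DifferentiableAt ℝ (iteratedFDeriv ℝ k r) (p + s • v) :=
    (hr.differentiable_iteratedFDeriv
      (by exact_mod_cast Nat.lt_of_succ_le hk)).differentiableAt
  have hline : HasDerivAt (fun s : ℝ => p + s • v) v s := by
    simpa using ((hasDerivAt_id s).smul_const v).const_add p
  have h1 : HasDerivAt (fun s : ℝ => iteratedFDeriv ℝ k r (p + s • v))
      (fderiv ℝ (iteratedFDeriv ℝ k r) (p + s • v) v) s :=
    hdiff.hasFDerivAt.comp_hasDerivAt s hline
  have h2 := (ContinuousMultilinearMap.apply ℝ (fun _ : Fin k => E2) ℝ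
    m).hasFDerivAt.comp_hasDerivAt s h1
  have h2' : HasDerivAt (fun s : ℝ => iteratedFDeriv ℝ k r (p + s • v) m)
      ((fderiv ℝ (iteratedFDeriv ℝ k r) (p + s • v) v) m) s := h2
  rw [h2'.deriv, iteratedFDeriv_succ_apply_left]
  simp

lemma deriv_slice_fun {r : E2 → ℝ} (hr : ContDiff ℝ 6 r) {k : ℕ} (hk : k + 1 ≤ 6)
    (m : Fin k → E2) (p v : E2) :
    deriv (fun s : ℝ => iteratedFDeriv ℝ k r (p + s • v) m)
      = fun s => iteratedFDeriv ℝ (k + 1) r (p + s • v) (Fin.cons v m) :=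
  funext fun s => slice_deriv hr hk m p v s

lemma cons_const (v : E2) (n : ℕ) :
    (Fin.cons v (fun _ : Fin n => v) : Fin (n+1) → E2) = fun _ => v := by
  funext i
  exact Fin.cases rfl (fun j => rfl) i

lemma iteratedDeriv_line {r : E2 → ℝ} (hr : ContDiff ℝ 6 r) (p v : E2) :
    ∀ n : ℕ, n ≤ 6 → ∀ t : ℝ, iteratedDeriv n (fun s : ℝ => r (p + s • v)) t
      = iteratedFDeriv ℝ n r (p + t • v) (fun _ => v) := by
  intro n
  induction n with
  | zero => intro _ t; simp
  | succ n ih =>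
    intro hn t
    rw [iteratedDeriv_succ]
    have hfun : iteratedDeriv n (fun s : ℝ => r (p + s • v))
        = fun s => iteratedFDeriv ℝ n r (p + s • v) (fun _ => v) :=
      funext fun s => ih (by omega) s
    rw [hfun, slice_deriv hr (by omega) _ p v t, cons_const]

lemma abs_D6_le {r : E2 → ℝ} {M : ℝ} (hM : ∀ z, ‖iteratedFDeriv ℝ 6 r z‖ ≤ M)
    (q : E2) (m : Fin 6 → E2) (hm : ∀ j, ‖m j‖ = 1) :
    |iteratedFDeriv ℝ 6 r q m| ≤ M := by
  have h := (iteratedFDeriv ℝ 6 r q).le_opNorm m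
  have hp : ∏ j, ‖m j‖ = 1 := by simp [hm]
  rw [hp, mul_one] at h
  calc |iteratedFDeriv ℝ 6 r q m| = ‖iteratedFDeriv ℝ 6 r q m‖ := rfl
    _ ≤ ‖iteratedFDeriv ℝ 6 r q‖ := h
    _ ≤ M := hM q

lemma HD1_five {r : E2 → ℝ} (hr : ContDiff ℝ 6 r) (p : E2) (t : ℝ) :
    iteratedDeriv 5 (fun s : ℝ => iteratedFDeriv ℝ 1 r (p + s • e1) (fun _ : Fin 1 => e2)) t
      = iteratedFDeriv ℝ 6 r (p + t • e1)
          (Fin.cons e1 (Fin.cons e1 (Fin.cons e1 (Fin.cons e1 (Fin.cons e1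
            (fun _ : Fin 1 => e2)))))) := by
  have iter5 : ∀ F : ℝ → ℝ, iteratedDeriv 5 F = deriv (deriv (deriv (deriv (deriv F)))) := by
    intro F; rw [iteratedDeriv_eq_iterate]; rfl
  rw [iter5]
  rw [deriv_slice_fun hr (by norm_num)]
  rw [deriv_slice_fun hr (by norm_num)]
  rw [deriv_slice_fun hr (by norm_num)]
  rw [deriv_slice_fun hr (by norm_num)]
  rw [deriv_slice_fun hr (by norm_num)]

lemma HD3_three {r : E2 → ℝ} (hr : ContDiff ℝ 6 r) (p : E2) (t : ℝ) :
    iteratedDeriv 3 (fun s : ℝ => iteratedFDeriv ℝ 3 r (p + s • e1) (fun _ : Fin 3 => e2)) t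
      = iteratedFDeriv ℝ 6 r (p + t • e1)
          (Fin.cons e1 (Fin.cons e1 (Fin.cons e1 (fun _ : Fin 3 => e2)))) := by
  have iter3 : ∀ F : ℝ → ℝ, iteratedDeriv 3 F = deriv (deriv (deriv F)) := by
    intro F; rw [iteratedDeriv_eq_iterate]; rfl
  rw [iter3]
  rw [deriv_slice_fun hr (by norm_num)]
  rw [deriv_slice_fun hr (by norm_num)]
  rw [deriv_slice_fun hr (by norm_num)]

lemma HD5_one {r : E2 → ℝ} (hr : ContDiff ℝ 6 r) (p : E2) (t : ℝ) :
    iteratedDeriv 1 (fun s : ℝ => iteratedFDeriv ℝ 5 r (p + s • e1) (fun _ : Fin 5 => e2)) t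
      = iteratedFDeriv ℝ 6 r (p + t • e1) (Fin.cons e1 (fun _ : Fin 5 => e2)) := by
  rw [iteratedDeriv_one]
  rw [deriv_slice_fun hr (by norm_num)]

lemma A13eq {r : E2 → ℝ} (hr : ContDiff ℝ 6 r) (z : E2) :
    iteratedDeriv 3 (fun s : ℝ => iteratedFDeriv ℝ 1 r (z + s • e1) (fun _ : Fin 1 => e2)) 0
      = iteratedFDeriv ℝ 4 r z ![e1, e1, e1, e2] := by
  have iter3 : ∀ F : ℝ → ℝ, iteratedDeriv 3 F = deriv (deriv (deriv F)) := by
    intro F; rw [iteratedDeriv_eq_iterate]; rfl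
  rw [iter3]
  rw [deriv_slice_fun hr (by norm_num)]
  rw [deriv_slice_fun hr (by norm_num)]
  rw [deriv_slice_fun hr (by norm_num)]
  rw [show (Fin.cons e1 (Fin.cons e1 (Fin.cons e1 (fun _ : Fin 1 => e2))) : Fin 4 → E2)
        = ![e1, e1, e1, e2] from by funext i; fin_cases i <;> rfl]
  simp

lemma step1 {r : E2 → ℝ} {M : ℝ} (hr : ContDiff ℝ 6 r)
    (hM : ∀ z, ‖iteratedFDeriv ℝ 6 r z‖ ≤ M) (z : E2) (a b : ℝ) :
    |r (z + a • e1 + b • e2) -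
        ∑ k ∈ Finset.range 6, b ^ k / (Nat.factorial k : ℝ) *
          iteratedFDeriv ℝ k r (z + a • e1) (fun _ : Fin k => e2)|
      ≤ M * |b| ^ 6 / 120 := by
  have hc : ContDiff ℝ ((5+1 : ℕ) : WithTop ℕ∞) (fun t : ℝ => r ((z + a • e1) + t • e2)) := by
    refine ContDiff.comp ?_ (contDiff_const.add (contDiff_id.smul contDiff_const))
    exact_mod_cast hr
  have hK : ∀ t : ℝ, |iteratedDeriv (5+1) (fun t : ℝ => r ((z + a • e1) + t • e2)) t| ≤ M := by
    intro t
    rw [show (5+1 : ℕ) = 6 from rfl]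
    rw [iteratedDeriv_line hr (z + a • e1) e2 6 le_rfl t]
    exact abs_D6_le hM _ _ (fun j => norm_e2)
  have hb := taylor_bound (n := 5) hc hK b
  have hs : ∑ k ∈ Finset.range (5+1), b ^ k / (Nat.factorial k : ℝ) *
        iteratedDeriv k (fun t : ℝ => r ((z + a • e1) + t • e2)) 0
      = ∑ k ∈ Finset.range (5+1), b ^ k / (Nat.factorial k : ℝ) *
          iteratedFDeriv ℝ k r (z + a • e1) (fun _ : Fin k => e2) := by
    refine Finset.sum_congr rfl fun k hk => ?_
    rw [iteratedDeriv_line hr (z + a • e1) e2 k (by have := Finset.mem_range.mp hk; omega) 0]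
    rw [zero_smul, add_zero]
  rw [hs] at hb
  rw [show ((Nat.factorial 5 : ℕ) : ℝ) = 120 from by norm_num [Nat.factorial]] at hb
  exact hb

lemma step3_1 {r : E2 → ℝ} {M : ℝ} (hr : ContDiff ℝ 6 r)
    (hM : ∀ z, ‖iteratedFDeriv ℝ 6 r z‖ ≤ M) (z : E2) (a : ℝ) :
    |iteratedFDeriv ℝ 1 r (z + a • e1) (fun _ : Fin 1 => e2) -
        ∑ i ∈ Finset.range 5, a ^ i / (Nat.factorial i : ℝ) *
          iteratedDeriv i (fun s : ℝ =>
            iteratedFDeriv ℝ 1 r (z + s • e1) (fun _ : Fin 1 => e2)) 0|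
      ≤ M * |a| ^ 5 / 24 := by
  have hc : ContDiff ℝ ((4+1 : ℕ) : WithTop ℕ∞)
      (fun s : ℝ => iteratedFDeriv ℝ 1 r (z + s • e1) (fun _ : Fin 1 => e2)) :=
    slice_contDiff hr (by norm_num) _ _ _
  have hK : ∀ t : ℝ, |iteratedDeriv (4+1)
      (fun s : ℝ => iteratedFDeriv ℝ 1 r (z + s • e1) (fun _ : Fin 1 => e2)) t| ≤ M := by
    intro t
    rw [show (4+1 : ℕ) = 5 from rfl, HD1_five hr z t]
    exact abs_D6_le hM _ _ (fun j => by fin_cases j <;> first | exact norm_e1 | exact norm_e2)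
  have hb := taylor_bound (n := 4) hc hK a
  rw [show ((Nat.factorial 4 : ℕ) : ℝ) = 24 from by norm_num [Nat.factorial]] at hb
  exact hb

lemma step3_3 {r : E2 → ℝ} {M : ℝ} (hr : ContDiff ℝ 6 r)
    (hM : ∀ z, ‖iteratedFDeriv ℝ 6 r z‖ ≤ M) (z : E2) (a : ℝ) :
    |iteratedFDeriv ℝ 3 r (z + a • e1) (fun _ : Fin 3 => e2) -
        ∑ i ∈ Finset.range 3, a ^ i / (Nat.factorial i : ℝ) *
          iteratedDeriv i (fun s : ℝ =>
            iteratedFDeriv ℝ 3 r (z + s • e1) (fun _ : Fin 3 => e2)) 0|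
      ≤ M * |a| ^ 3 / 2 := by
  have hc : ContDiff ℝ ((2+1 : ℕ) : WithTop ℕ∞)
      (fun s : ℝ => iteratedFDeriv ℝ 3 r (z + s • e1) (fun _ : Fin 3 => e2)) :=
    slice_contDiff hr (by norm_num) _ _ _
  have hK : ∀ t : ℝ, |iteratedDeriv (2+1)
      (fun s : ℝ => iteratedFDeriv ℝ 3 r (z + s • e1) (fun _ : Fin 3 => e2)) t| ≤ M := by
    intro t
    rw [show (2+1 : ℕ) = 3 from rfl, HD3_three hr z t]
    exact abs_D6_le hM _ _ (fun j => by fin_cases j <;> first | exact norm_e1 | exact norm_e2)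
  have hb := taylor_bound (n := 2) hc hK a
  rw [show ((Nat.factorial 2 : ℕ) : ℝ) = 2 from by norm_num [Nat.factorial]] at hb
  exact hb

lemma step3_5 {r : E2 → ℝ} {M : ℝ} (hr : ContDiff ℝ 6 r)
    (hM : ∀ z, ‖iteratedFDeriv ℝ 6 r z‖ ≤ M) (z : E2) (a : ℝ) :
    |iteratedFDeriv ℝ 5 r (z + a • e1) (fun _ : Fin 5 => e2) -
        ∑ i ∈ Finset.range 1, a ^ i / (Nat.factorial i : ℝ) *
          iteratedDeriv i (fun s : ℝ =>
            iteratedFDeriv ℝ 5 r (z + s • e1) (fun _ : Fin 5 => e2)) 0|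
      ≤ M * |a| ^ 1 / 1 := by
  have hc : ContDiff ℝ ((0+1 : ℕ) : WithTop ℕ∞)
      (fun s : ℝ => iteratedFDeriv ℝ 5 r (z + s • e1) (fun _ : Fin 5 => e2)) :=
    slice_contDiff hr (by norm_num) _ _ _
  have hK : ∀ t : ℝ, |iteratedDeriv (0+1)
      (fun s : ℝ => iteratedFDeriv ℝ 5 r (z + s • e1) (fun _ : Fin 5 => e2)) t| ≤ M := by
    intro t
    rw [show (0+1 : ℕ) = 1 from rfl, HD5_one hr z t]
    exact abs_D6_le hM _ _ (fun j => by fin_cases j <;> first | exact norm_e1 | exact norm_e2)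
  have hb := taylor_bound (n := 0) hc hK a
  rw [show ((Nat.factorial 0 : ℕ) : ℝ) = 1 from by norm_num [Nat.factorial]] at hb
  exact hb

set_option maxHeartbeats 3000000 in
/-- quadratic precision of the 5×5 stencil `ũ_xxxy`: there is an
absolute constant `C > 0` such that for every `r : ℝ² → ℝ` six times continuously
differentiable with `‖D⁶r(z)‖ ≤ M` everywhere, every `(x, y)` and every `h > 0`, the
stencil value `(1/(2h⁴))·[(−(1/2)r(x−2h,y+h) + r(x−h,y+h) − r(x+h,y+h) +
(1/2)r(x+2h,y+h)) − (−(1/2)r(x−2h,y−h) + r(x−h,y−h) − r(x+h,y−h) + (1/2)r(x+2h,y−h))]`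
differs from `∂⁴r/∂x³∂y(x,y)` by at most `C·M·h²`. -/
theorem xxxy_stencil_quadratic_precision :
    ∃ C : ℝ, 0 < C ∧
      ∀ (r : EuclideanSpace ℝ (Fin 2) → ℝ) (M : ℝ), ContDiff ℝ 6 r →
        (∀ z, ‖iteratedFDeriv ℝ 6 r z‖ ≤ M) →
        ∀ x y h : ℝ, 0 < h →
          |(1 / (2 * h ^ 4)) *
              ((-(1/2) * r (pt2 (x - 2*h) (y + h)) + r (pt2 (x - h) (y + h))
                  - r (pt2 (x + h) (y + h)) + (1/2) * r (pt2 (x + 2*h) (y + h)))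
                - (-(1/2) * r (pt2 (x - 2*h) (y - h)) + r (pt2 (x - h) (y - h))
                  - r (pt2 (x + h) (y - h)) + (1/2) * r (pt2 (x + 2*h) (y - h))))
            - iteratedFDeriv ℝ 4 r (pt2 x y) ![e1, e1, e1, e2]| ≤ C * M * h ^ 2 := by
  refine ⟨100, by norm_num, ?_⟩
  intro r M hr hM x y h hp
  have hM0 : 0 ≤ M := le_trans (norm_nonneg _) (hM (pt2 x y))
  have hne : h ≠ 0 := ne_of_gt hp
  have habsA : |(-(2 * h) : ℝ)| = 2 * h := by rw [abs_neg]; exact abs_of_pos (by linarith)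
  have habsB : |(-h : ℝ)| = h := by rw [abs_neg]; exact abs_of_pos hp
  have habsC : |(h : ℝ)| = h := abs_of_pos hp
  have habsD : |(2 * h : ℝ)| = 2 * h := abs_of_pos (by linarith)
  have hm5a : M * (2 * h) ^ 5 / 24 ≤ (4:ℝ)/3 * M * h ^ 5 := le_of_eq (by ring)
  have hm5b : M * h ^ 5 / 24 ≤ (4:ℝ)/3 * M * h ^ 5 := by
    nlinarith [mul_nonneg hM0 (pow_nonneg hp.le 5)]
  have hm3a : M * (2 * h) ^ 3 / 2 ≤ 4 * M * h ^ 3 := le_of_eq (by ring)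
  have hm3b : M * h ^ 3 / 2 ≤ 4 * M * h ^ 3 := by
    nlinarith [mul_nonneg hM0 (pow_nonneg hp.le 3)]
  have hm1a : M * (2 * h) ^ 1 / 1 ≤ 2 * M * h := le_of_eq (by ring)
  have hm1b : M * h ^ 1 / 1 ≤ 2 * M * h := by
    nlinarith [mul_nonneg hM0 hp.le]
  have p1 : pt2 (x - 2*h) (y + h) = pt2 x y + (-(2 * h)) • e1 + h • e2 := by
    rw [show x - 2*h = x + (-(2 * h)) from by ring]; exact pt2_add x y _ _
  have p2 : pt2 (x - h) (y + h) = pt2 x y + (-h) • e1 + h • e2 := by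
    rw [show x - h = x + (-h) from by ring]; exact pt2_add x y _ _
  have p3 : pt2 (x + h) (y + h) = pt2 x y + h • e1 + h • e2 := pt2_add x y _ _
  have p4 : pt2 (x + 2*h) (y + h) = pt2 x y + (2 * h) • e1 + h • e2 := pt2_add x y _ _
  have p5 : pt2 (x - 2*h) (y - h) = pt2 x y + (-(2 * h)) • e1 + (-h) • e2 := by
    rw [show x - 2*h = x + (-(2 * h)) from by ring, show y - h = y + (-h) from by ring]
    exact pt2_add x y _ _
  have p6 : pt2 (x - h) (y - h) = pt2 x y + (-h) • e1 + (-h) • e2 := by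
    rw [show x - h = x + (-h) from by ring, show y - h = y + (-h) from by ring]
    exact pt2_add x y _ _
  have p7 : pt2 (x + h) (y - h) = pt2 x y + h • e1 + (-h) • e2 := by
    rw [show y - h = y + (-h) from by ring]; exact pt2_add x y _ _
  have p8 : pt2 (x + 2*h) (y - h) = pt2 x y + (2 * h) • e1 + (-h) • e2 := by
    rw [show y - h = y + (-h) from by ring]; exact pt2_add x y _ _
  rw [p1, p2, p3, p4, p5, p6, p7, p8]
  clear p1 p2 p3 p4 p5 p6 p7 p8
  obtain ⟨d1, hd1, hb1⟩ : ∃ d : ℝ, r (pt2 x y + (-(2 * h)) • e1 + h • e2) = (∑ k ∈ Finset.range 6, h ^ k / (Nat.factorial k : ℝ) * iteratedFDeriv ℝ k r (pt2 x y + (-(2 * h)) • e1) (fun _ : Fin k => e2)) + d ∧ |d| ≤ M * h ^ 6 / 120 := by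
    refine ⟨r (pt2 x y + (-(2 * h)) • e1 + h • e2) - (∑ k ∈ Finset.range 6, h ^ k / (Nat.factorial k : ℝ) * iteratedFDeriv ℝ k r (pt2 x y + (-(2 * h)) • e1) (fun _ : Fin k => e2)), by ring, ?_⟩
    have hs := step1 hr hM (pt2 x y) (-(2 * h)) h
    rw [habsC] at hs
    exact hs
  obtain ⟨d2, hd2, hb2⟩ : ∃ d : ℝ, r (pt2 x y + (-h) • e1 + h • e2) = (∑ k ∈ Finset.range 6, h ^ k / (Nat.factorial k : ℝ) * iteratedFDeriv ℝ k r (pt2 x y + (-h) • e1) (fun _ : Fin k => e2)) + d ∧ |d| ≤ M * h ^ 6 / 120 := by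
    refine ⟨r (pt2 x y + (-h) • e1 + h • e2) - (∑ k ∈ Finset.range 6, h ^ k / (Nat.factorial k : ℝ) * iteratedFDeriv ℝ k r (pt2 x y + (-h) • e1) (fun _ : Fin k => e2)), by ring, ?_⟩
    have hs := step1 hr hM (pt2 x y) (-h) h
    rw [habsC] at hs
    exact hs
  obtain ⟨d3, hd3, hb3⟩ : ∃ d : ℝ, r (pt2 x y + h • e1 + h • e2) = (∑ k ∈ Finset.range 6, h ^ k / (Nat.factorial k : ℝ) * iteratedFDeriv ℝ k r (pt2 x y + h • e1) (fun _ : Fin k => e2)) + d ∧ |d| ≤ M * h ^ 6 / 120 := by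
    refine ⟨r (pt2 x y + h • e1 + h • e2) - (∑ k ∈ Finset.range 6, h ^ k / (Nat.factorial k : ℝ) * iteratedFDeriv ℝ k r (pt2 x y + h • e1) (fun _ : Fin k => e2)), by ring, ?_⟩
    have hs := step1 hr hM (pt2 x y) h h
    rw [habsC] at hs
    exact hs
  obtain ⟨d4, hd4, hb4⟩ : ∃ d : ℝ, r (pt2 x y + (2 * h) • e1 + h • e2) = (∑ k ∈ Finset.range 6, h ^ k / (Nat.factorial k : ℝ) * iteratedFDeriv ℝ k r (pt2 x y + (2 * h) • e1) (fun _ : Fin k => e2)) + d ∧ |d| ≤ M * h ^ 6 / 120 := by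
    refine ⟨r (pt2 x y + (2 * h) • e1 + h • e2) - (∑ k ∈ Finset.range 6, h ^ k / (Nat.factorial k : ℝ) * iteratedFDeriv ℝ k r (pt2 x y + (2 * h) • e1) (fun _ : Fin k => e2)), by ring, ?_⟩
    have hs := step1 hr hM (pt2 x y) (2 * h) h
    rw [habsC] at hs
    exact hs
  obtain ⟨d5, hd5, hb5⟩ : ∃ d : ℝ, r (pt2 x y + (-(2 * h)) • e1 + (-h) • e2) = (∑ k ∈ Finset.range 6, (-h) ^ k / (Nat.factorial k : ℝ) * iteratedFDeriv ℝ k r (pt2 x y + (-(2 * h)) • e1) (fun _ : Fin k => e2)) + d ∧ |d| ≤ M * h ^ 6 / 120 := by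
    refine ⟨r (pt2 x y + (-(2 * h)) • e1 + (-h) • e2) - (∑ k ∈ Finset.range 6, (-h) ^ k / (Nat.factorial k : ℝ) * iteratedFDeriv ℝ k r (pt2 x y + (-(2 * h)) • e1) (fun _ : Fin k => e2)), by ring, ?_⟩
    have hs := step1 hr hM (pt2 x y) (-(2 * h)) (-h)
    rw [habsB] at hs
    exact hs
  obtain ⟨d6, hd6, hb6⟩ : ∃ d : ℝ, r (pt2 x y + (-h) • e1 + (-h) • e2) = (∑ k ∈ Finset.range 6, (-h) ^ k / (Nat.factorial k : ℝ) * iteratedFDeriv ℝ k r (pt2 x y + (-h) • e1) (fun _ : Fin k => e2)) + d ∧ |d| ≤ M * h ^ 6 / 120 := by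
    refine ⟨r (pt2 x y + (-h) • e1 + (-h) • e2) - (∑ k ∈ Finset.range 6, (-h) ^ k / (Nat.factorial k : ℝ) * iteratedFDeriv ℝ k r (pt2 x y + (-h) • e1) (fun _ : Fin k => e2)), by ring, ?_⟩
    have hs := step1 hr hM (pt2 x y) (-h) (-h)
    rw [habsB] at hs
    exact hs
  obtain ⟨d7, hd7, hb7⟩ : ∃ d : ℝ, r (pt2 x y + h • e1 + (-h) • e2) = (∑ k ∈ Finset.range 6, (-h) ^ k / (Nat.factorial k : ℝ) * iteratedFDeriv ℝ k r (pt2 x y + h • e1) (fun _ : Fin k => e2)) + d ∧ |d| ≤ M * h ^ 6 / 120 := by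
    refine ⟨r (pt2 x y + h • e1 + (-h) • e2) - (∑ k ∈ Finset.range 6, (-h) ^ k / (Nat.factorial k : ℝ) * iteratedFDeriv ℝ k r (pt2 x y + h • e1) (fun _ : Fin k => e2)), by ring, ?_⟩
    have hs := step1 hr hM (pt2 x y) h (-h)
    rw [habsB] at hs
    exact hs
  obtain ⟨d8, hd8, hb8⟩ : ∃ d : ℝ, r (pt2 x y + (2 * h) • e1 + (-h) • e2) = (∑ k ∈ Finset.range 6, (-h) ^ k / (Nat.factorial k : ℝ) * iteratedFDeriv ℝ k r (pt2 x y + (2 * h) • e1) (fun _ : Fin k => e2)) + d ∧ |d| ≤ M * h ^ 6 / 120 := by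
    refine ⟨r (pt2 x y + (2 * h) • e1 + (-h) • e2) - (∑ k ∈ Finset.range 6, (-h) ^ k / (Nat.factorial k : ℝ) * iteratedFDeriv ℝ k r (pt2 x y + (2 * h) • e1) (fun _ : Fin k => e2)), by ring, ?_⟩
    have hs := step1 hr hM (pt2 x y) (2 * h) (-h)
    rw [habsB] at hs
    exact hs
  obtain ⟨d9, hd9, hb9⟩ : ∃ d : ℝ, iteratedFDeriv ℝ 1 r (pt2 x y + (-(2 * h)) • e1) (fun _ : Fin 1 => e2) = (∑ i ∈ Finset.range 5, (-(2 * h)) ^ i / (Nat.factorial i : ℝ) * iteratedDeriv i (fun s : ℝ => iteratedFDeriv ℝ 1 r (pt2 x y + s • e1) (fun _ : Fin 1 => e2)) 0) + d ∧ |d| ≤ (4:ℝ)/3 * M * h ^ 5 := by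
    refine ⟨iteratedFDeriv ℝ 1 r (pt2 x y + (-(2 * h)) • e1) (fun _ : Fin 1 => e2) - (∑ i ∈ Finset.range 5, (-(2 * h)) ^ i / (Nat.factorial i : ℝ) * iteratedDeriv i (fun s : ℝ => iteratedFDeriv ℝ 1 r (pt2 x y + s • e1) (fun _ : Fin 1 => e2)) 0), by ring, ?_⟩
    have hs := step3_1 hr hM (pt2 x y) (-(2 * h))
    rw [habsA] at hs
    exact le_trans hs hm5a
  obtain ⟨d10, hd10, hb10⟩ : ∃ d : ℝ, iteratedFDeriv ℝ 1 r (pt2 x y + (-h) • e1) (fun _ : Fin 1 => e2) = (∑ i ∈ Finset.range 5, (-h) ^ i / (Nat.factorial i : ℝ) * iteratedDeriv i (fun s : ℝ => iteratedFDeriv ℝ 1 r (pt2 x y + s • e1) (fun _ : Fin 1 => e2)) 0) + d ∧ |d| ≤ (4:ℝ)/3 * M * h ^ 5 := by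
    refine ⟨iteratedFDeriv ℝ 1 r (pt2 x y + (-h) • e1) (fun _ : Fin 1 => e2) - (∑ i ∈ Finset.range 5, (-h) ^ i / (Nat.factorial i : ℝ) * iteratedDeriv i (fun s : ℝ => iteratedFDeriv ℝ 1 r (pt2 x y + s • e1) (fun _ : Fin 1 => e2)) 0), by ring, ?_⟩
    have hs := step3_1 hr hM (pt2 x y) (-h)
    rw [habsB] at hs
    exact le_trans hs hm5b
  obtain ⟨d11, hd11, hb11⟩ : ∃ d : ℝ, iteratedFDeriv ℝ 1 r (pt2 x y + h • e1) (fun _ : Fin 1 => e2) = (∑ i ∈ Finset.range 5, h ^ i / (Nat.factorial i : ℝ) * iteratedDeriv i (fun s : ℝ => iteratedFDeriv ℝ 1 r (pt2 x y + s • e1) (fun _ : Fin 1 => e2)) 0) + d ∧ |d| ≤ (4:ℝ)/3 * M * h ^ 5 := by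
    refine ⟨iteratedFDeriv ℝ 1 r (pt2 x y + h • e1) (fun _ : Fin 1 => e2) - (∑ i ∈ Finset.range 5, h ^ i / (Nat.factorial i : ℝ) * iteratedDeriv i (fun s : ℝ => iteratedFDeriv ℝ 1 r (pt2 x y + s • e1) (fun _ : Fin 1 => e2)) 0), by ring, ?_⟩
    have hs := step3_1 hr hM (pt2 x y) h
    rw [habsC] at hs
    exact le_trans hs hm5b
  obtain ⟨d12, hd12, hb12⟩ : ∃ d : ℝ, iteratedFDeriv ℝ 1 r (pt2 x y + (2 * h) • e1) (fun _ : Fin 1 => e2) = (∑ i ∈ Finset.range 5, (2 * h) ^ i / (Nat.factorial i : ℝ) * iteratedDeriv i (fun s : ℝ => iteratedFDeriv ℝ 1 r (pt2 x y + s • e1) (fun _ : Fin 1 => e2)) 0) + d ∧ |d| ≤ (4:ℝ)/3 * M * h ^ 5 := by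
    refine ⟨iteratedFDeriv ℝ 1 r (pt2 x y + (2 * h) • e1) (fun _ : Fin 1 => e2) - (∑ i ∈ Finset.range 5, (2 * h) ^ i / (Nat.factorial i : ℝ) * iteratedDeriv i (fun s : ℝ => iteratedFDeriv ℝ 1 r (pt2 x y + s • e1) (fun _ : Fin 1 => e2)) 0), by ring, ?_⟩
    have hs := step3_1 hr hM (pt2 x y) (2 * h)
    rw [habsD] at hs
    exact le_trans hs hm5a
  obtain ⟨d13, hd13, hb13⟩ : ∃ d : ℝ, iteratedFDeriv ℝ 3 r (pt2 x y + (-(2 * h)) • e1) (fun _ : Fin 3 => e2) = (∑ i ∈ Finset.range 3, (-(2 * h)) ^ i / (Nat.factorial i : ℝ) * iteratedDeriv i (fun s : ℝ => iteratedFDeriv ℝ 3 r (pt2 x y + s • e1) (fun _ : Fin 3 => e2)) 0) + d ∧ |d| ≤ 4 * M * h ^ 3 := by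
    refine ⟨iteratedFDeriv ℝ 3 r (pt2 x y + (-(2 * h)) • e1) (fun _ : Fin 3 => e2) - (∑ i ∈ Finset.range 3, (-(2 * h)) ^ i / (Nat.factorial i : ℝ) * iteratedDeriv i (fun s : ℝ => iteratedFDeriv ℝ 3 r (pt2 x y + s • e1) (fun _ : Fin 3 => e2)) 0), by ring, ?_⟩
    have hs := step3_3 hr hM (pt2 x y) (-(2 * h))
    rw [habsA] at hs
    exact le_trans hs hm3a
  obtain ⟨d14, hd14, hb14⟩ : ∃ d : ℝ, iteratedFDeriv ℝ 3 r (pt2 x y + (-h) • e1) (fun _ : Fin 3 => e2) = (∑ i ∈ Finset.range 3, (-h) ^ i / (Nat.factorial i : ℝ) * iteratedDeriv i (fun s : ℝ => iteratedFDeriv ℝ 3 r (pt2 x y + s • e1) (fun _ : Fin 3 => e2)) 0) + d ∧ |d| ≤ 4 * M * h ^ 3 := by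
    refine ⟨iteratedFDeriv ℝ 3 r (pt2 x y + (-h) • e1) (fun _ : Fin 3 => e2) - (∑ i ∈ Finset.range 3, (-h) ^ i / (Nat.factorial i : ℝ) * iteratedDeriv i (fun s : ℝ => iteratedFDeriv ℝ 3 r (pt2 x y + s • e1) (fun _ : Fin 3 => e2)) 0), by ring, ?_⟩
    have hs := step3_3 hr hM (pt2 x y) (-h)
    rw [habsB] at hs
    exact le_trans hs hm3b
  obtain ⟨d15, hd15, hb15⟩ : ∃ d : ℝ, iteratedFDeriv ℝ 3 r (pt2 x y + h • e1) (fun _ : Fin 3 => e2) = (∑ i ∈ Finset.range 3, h ^ i / (Nat.factorial i : ℝ) * iteratedDeriv i (fun s : ℝ => iteratedFDeriv ℝ 3 r (pt2 x y + s • e1) (fun _ : Fin 3 => e2)) 0) + d ∧ |d| ≤ 4 * M * h ^ 3 := by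
    refine ⟨iteratedFDeriv ℝ 3 r (pt2 x y + h • e1) (fun _ : Fin 3 => e2) - (∑ i ∈ Finset.range 3, h ^ i / (Nat.factorial i : ℝ) * iteratedDeriv i (fun s : ℝ => iteratedFDeriv ℝ 3 r (pt2 x y + s • e1) (fun _ : Fin 3 => e2)) 0), by ring, ?_⟩
    have hs := step3_3 hr hM (pt2 x y) h
    rw [habsC] at hs
    exact le_trans hs hm3b
  obtain ⟨d16, hd16, hb16⟩ : ∃ d : ℝ, iteratedFDeriv ℝ 3 r (pt2 x y + (2 * h) • e1) (fun _ : Fin 3 => e2) = (∑ i ∈ Finset.range 3, (2 * h) ^ i / (Nat.factorial i : ℝ) * iteratedDeriv i (fun s : ℝ => iteratedFDeriv ℝ 3 r (pt2 x y + s • e1) (fun _ : Fin 3 => e2)) 0) + d ∧ |d| ≤ 4 * M * h ^ 3 := by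
    refine ⟨iteratedFDeriv ℝ 3 r (pt2 x y + (2 * h) • e1) (fun _ : Fin 3 => e2) - (∑ i ∈ Finset.range 3, (2 * h) ^ i / (Nat.factorial i : ℝ) * iteratedDeriv i (fun s : ℝ => iteratedFDeriv ℝ 3 r (pt2 x y + s • e1) (fun _ : Fin 3 => e2)) 0), by ring, ?_⟩
    have hs := step3_3 hr hM (pt2 x y) (2 * h)
    rw [habsD] at hs
    exact le_trans hs hm3a
  obtain ⟨d17, hd17, hb17⟩ : ∃ d : ℝ, iteratedFDeriv ℝ 5 r (pt2 x y + (-(2 * h)) • e1) (fun _ : Fin 5 => e2) = (∑ i ∈ Finset.range 1, (-(2 * h)) ^ i / (Nat.factorial i : ℝ) * iteratedDeriv i (fun s : ℝ => iteratedFDeriv ℝ 5 r (pt2 x y + s • e1) (fun _ : Fin 5 => e2)) 0) + d ∧ |d| ≤ 2 * M * h := by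
    refine ⟨iteratedFDeriv ℝ 5 r (pt2 x y + (-(2 * h)) • e1) (fun _ : Fin 5 => e2) - (∑ i ∈ Finset.range 1, (-(2 * h)) ^ i / (Nat.factorial i : ℝ) * iteratedDeriv i (fun s : ℝ => iteratedFDeriv ℝ 5 r (pt2 x y + s • e1) (fun _ : Fin 5 => e2)) 0), by ring, ?_⟩
    have hs := step3_5 hr hM (pt2 x y) (-(2 * h))
    rw [habsA] at hs
    exact le_trans hs hm1a
  obtain ⟨d18, hd18, hb18⟩ : ∃ d : ℝ, iteratedFDeriv ℝ 5 r (pt2 x y + (-h) • e1) (fun _ : Fin 5 => e2) = (∑ i ∈ Finset.range 1, (-h) ^ i / (Nat.factorial i : ℝ) * iteratedDeriv i (fun s : ℝ => iteratedFDeriv ℝ 5 r (pt2 x y + s • e1) (fun _ : Fin 5 => e2)) 0) + d ∧ |d| ≤ 2 * M * h := by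
    refine ⟨iteratedFDeriv ℝ 5 r (pt2 x y + (-h) • e1) (fun _ : Fin 5 => e2) - (∑ i ∈ Finset.range 1, (-h) ^ i / (Nat.factorial i : ℝ) * iteratedDeriv i (fun s : ℝ => iteratedFDeriv ℝ 5 r (pt2 x y + s • e1) (fun _ : Fin 5 => e2)) 0), by ring, ?_⟩
    have hs := step3_5 hr hM (pt2 x y) (-h)
    rw [habsB] at hs
    exact le_trans hs hm1b
  obtain ⟨d19, hd19, hb19⟩ : ∃ d : ℝ, iteratedFDeriv ℝ 5 r (pt2 x y + h • e1) (fun _ : Fin 5 => e2) = (∑ i ∈ Finset.range 1, h ^ i / (Nat.factorial i : ℝ) * iteratedDeriv i (fun s : ℝ => iteratedFDeriv ℝ 5 r (pt2 x y + s • e1) (fun _ : Fin 5 => e2)) 0) + d ∧ |d| ≤ 2 * M * h := by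
    refine ⟨iteratedFDeriv ℝ 5 r (pt2 x y + h • e1) (fun _ : Fin 5 => e2) - (∑ i ∈ Finset.range 1, h ^ i / (Nat.factorial i : ℝ) * iteratedDeriv i (fun s : ℝ => iteratedFDeriv ℝ 5 r (pt2 x y + s • e1) (fun _ : Fin 5 => e2)) 0), by ring, ?_⟩
    have hs := step3_5 hr hM (pt2 x y) h
    rw [habsC] at hs
    exact le_trans hs hm1b
  obtain ⟨d20, hd20, hb20⟩ : ∃ d : ℝ, iteratedFDeriv ℝ 5 r (pt2 x y + (2 * h) • e1) (fun _ : Fin 5 => e2) = (∑ i ∈ Finset.range 1, (2 * h) ^ i / (Nat.factorial i : ℝ) * iteratedDeriv i (fun s : ℝ => iteratedFDeriv ℝ 5 r (pt2 x y + s • e1) (fun _ : Fin 5 => e2)) 0) + d ∧ |d| ≤ 2 * M * h := by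
    refine ⟨iteratedFDeriv ℝ 5 r (pt2 x y + (2 * h) • e1) (fun _ : Fin 5 => e2) - (∑ i ∈ Finset.range 1, (2 * h) ^ i / (Nat.factorial i : ℝ) * iteratedDeriv i (fun s : ℝ => iteratedFDeriv ℝ 5 r (pt2 x y + s • e1) (fun _ : Fin 5 => e2)) 0), by ring, ?_⟩
    have hs := step3_5 hr hM (pt2 x y) (2 * h)
    rw [habsD] at hs
    exact le_trans hs hm1a
  have key : (1 / (2 * h ^ 4)) *
      ((-(1/2) * r (pt2 x y + (-(2 * h)) • e1 + h • e2) + r (pt2 x y + (-h) • e1 + h • e2)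
          - r (pt2 x y + h • e1 + h • e2) + (1/2) * r (pt2 x y + (2 * h) • e1 + h • e2))
        - (-(1/2) * r (pt2 x y + (-(2 * h)) • e1 + (-h) • e2) + r (pt2 x y + (-h) • e1 + (-h) • e2)
          - r (pt2 x y + h • e1 + (-h) • e2) + (1/2) * r (pt2 x y + (2 * h) • e1 + (-h) • e2)))
      - iteratedFDeriv ℝ 4 r (pt2 x y) ![e1, e1, e1, e2]
      = (1 / (2 * h ^ 4)) * ((-(1/2) * d1 + d2 - d3 + (1/2) * d4 - (-(1/2) * d5 + d6 - d7 + (1/2) * d8)) + 2 * h * (-(1/2) * d9 + d10 - d11 + (1/2) * d12) + h ^ 3 / 3 * (-(1/2) * d13 + d14 - d15 + (1/2) * d16) + h ^ 5 / 60 * (-(1/2) * d17 + d18 - d19 + (1/2) * d20)) := by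
    rw [hd1, hd2, hd3, hd4, hd5, hd6, hd7, hd8]
    simp only [Finset.sum_range_succ, Finset.sum_range_zero]
    rw [hd9, hd10, hd11, hd12, hd13, hd14, hd15, hd16, hd17, hd18, hd19, hd20]
    simp only [Finset.sum_range_succ, Finset.sum_range_zero]
    rw [A13eq hr (pt2 x y)]
    norm_num [Nat.factorial]
    field_simp
    ring
  rw [key, abs_mul, abs_of_pos (show (0:ℝ) < 1 / (2 * h ^ 4) from by positivity)]
  clear key hd1 hd2 hd3 hd4 hd5 hd6 hd7 hd8 hd9 hd10 hd11 hd12 hd13 hd14 hd15 hd16 hd17 hd18 hd19 hd20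
  obtain ⟨l1, u1⟩ := abs_le.mp hb1
  obtain ⟨l2, u2⟩ := abs_le.mp hb2
  obtain ⟨l3, u3⟩ := abs_le.mp hb3
  obtain ⟨l4, u4⟩ := abs_le.mp hb4
  obtain ⟨l5, u5⟩ := abs_le.mp hb5
  obtain ⟨l6, u6⟩ := abs_le.mp hb6
  obtain ⟨l7, u7⟩ := abs_le.mp hb7
  obtain ⟨l8, u8⟩ := abs_le.mp hb8
  obtain ⟨l9, u9⟩ := abs_le.mp hb9
  obtain ⟨l10, u10⟩ := abs_le.mp hb10
  obtain ⟨l11, u11⟩ := abs_le.mp hb11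
  obtain ⟨l12, u12⟩ := abs_le.mp hb12
  obtain ⟨l13, u13⟩ := abs_le.mp hb13
  obtain ⟨l14, u14⟩ := abs_le.mp hb14
  obtain ⟨l15, u15⟩ := abs_le.mp hb15
  obtain ⟨l16, u16⟩ := abs_le.mp hb16
  obtain ⟨l17, u17⟩ := abs_le.mp hb17
  obtain ⟨l18, u18⟩ := abs_le.mp hb18
  obtain ⟨l19, u19⟩ := abs_le.mp hb19
  obtain ⟨l20, u20⟩ := abs_le.mp hb20
  have gE : |(-(1/2) * d1 + d2 - d3 + (1/2) * d4 - (-(1/2) * d5 + d6 - d7 + (1/2) * d8))| ≤ M * h ^ 6 / 20 := abs_le.mpr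
    ⟨by linarith only [l1, l2, l3, l4, l5, l6, l7, l8, u1, u2, u3, u4, u5, u6, u7, u8],
     by linarith only [l1, l2, l3, l4, l5, l6, l7, l8, u1, u2, u3, u4, u5, u6, u7, u8]⟩
  have g1 : |(-(1/2) * d9 + d10 - d11 + (1/2) * d12)| ≤ 4 * M * h ^ 5 := abs_le.mpr
    ⟨by linarith only [l9, l10, l11, l12, u9, u10, u11, u12],
     by linarith only [l9, l10, l11, l12, u9, u10, u11, u12]⟩
  have g3 : |(-(1/2) * d13 + d14 - d15 + (1/2) * d16)| ≤ 12 * M * h ^ 3 := abs_le.mpr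
    ⟨by linarith only [l13, l14, l15, l16, u13, u14, u15, u16],
     by linarith only [l13, l14, l15, l16, u13, u14, u15, u16]⟩
  have g5 : |(-(1/2) * d17 + d18 - d19 + (1/2) * d20)| ≤ 6 * M * h := abs_le.mpr
    ⟨by linarith only [l17, l18, l19, l20, u17, u18, u19, u20],
     by linarith only [l17, l18, l19, l20, u17, u18, u19, u20]⟩
  have e2h : |2 * h * (-(1/2) * d9 + d10 - d11 + (1/2) * d12)| ≤ 2 * h * (4 * M * h ^ 5) := by
    rw [abs_mul, abs_of_pos (show (0:ℝ) < 2 * h from by linarith only [hp])]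
    exact mul_le_mul_of_nonneg_left g1 (by linarith only [hp])
  have e3h : |h ^ 3 / 3 * (-(1/2) * d13 + d14 - d15 + (1/2) * d16)| ≤ h ^ 3 / 3 * (12 * M * h ^ 3) := by
    rw [abs_mul, abs_of_pos (show (0:ℝ) < h ^ 3 / 3 from by positivity)]
    exact mul_le_mul_of_nonneg_left g3 (by positivity)
  have e5h : |h ^ 5 / 60 * (-(1/2) * d17 + d18 - d19 + (1/2) * d20)| ≤ h ^ 5 / 60 * (6 * M * h) := by
    rw [abs_mul, abs_of_pos (show (0:ℝ) < h ^ 5 / 60 from by positivity)]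
    exact mul_le_mul_of_nonneg_left g5 (by positivity)
  have tri : |((-(1/2) * d1 + d2 - d3 + (1/2) * d4 - (-(1/2) * d5 + d6 - d7 + (1/2) * d8)) + 2 * h * (-(1/2) * d9 + d10 - d11 + (1/2) * d12) + h ^ 3 / 3 * (-(1/2) * d13 + d14 - d15 + (1/2) * d16) + h ^ 5 / 60 * (-(1/2) * d17 + d18 - d19 + (1/2) * d20))|
      ≤ |(-(1/2) * d1 + d2 - d3 + (1/2) * d4 - (-(1/2) * d5 + d6 - d7 + (1/2) * d8))| + |2 * h * (-(1/2) * d9 + d10 - d11 + (1/2) * d12)| + |h ^ 3 / 3 * (-(1/2) * d13 + d14 - d15 + (1/2) * d16)| + |h ^ 5 / 60 * (-(1/2) * d17 + d18 - d19 + (1/2) * d20)| := by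
    have t1 := abs_add_le ((-(1/2) * d1 + d2 - d3 + (1/2) * d4 - (-(1/2) * d5 + d6 - d7 + (1/2) * d8)) + 2 * h * (-(1/2) * d9 + d10 - d11 + (1/2) * d12) + h ^ 3 / 3 * (-(1/2) * d13 + d14 - d15 + (1/2) * d16)) (h ^ 5 / 60 * (-(1/2) * d17 + d18 - d19 + (1/2) * d20))
    have t2 := abs_add_le ((-(1/2) * d1 + d2 - d3 + (1/2) * d4 - (-(1/2) * d5 + d6 - d7 + (1/2) * d8)) + 2 * h * (-(1/2) * d9 + d10 - d11 + (1/2) * d12)) (h ^ 3 / 3 * (-(1/2) * d13 + d14 - d15 + (1/2) * d16))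
    have t3 := abs_add_le (-(1/2) * d1 + d2 - d3 + (1/2) * d4 - (-(1/2) * d5 + d6 - d7 + (1/2) * d8)) (2 * h * (-(1/2) * d9 + d10 - d11 + (1/2) * d12))
    linarith only [t1, t2, t3]
  have hW : |((-(1/2) * d1 + d2 - d3 + (1/2) * d4 - (-(1/2) * d5 + d6 - d7 + (1/2) * d8)) + 2 * h * (-(1/2) * d9 + d10 - d11 + (1/2) * d12) + h ^ 3 / 3 * (-(1/2) * d13 + d14 - d15 + (1/2) * d16) + h ^ 5 / 60 * (-(1/2) * d17 + d18 - d19 + (1/2) * d20))|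
      ≤ M * h ^ 6 / 20 + 2 * h * (4 * M * h ^ 5) + h ^ 3 / 3 * (12 * M * h ^ 3)
        + h ^ 5 / 60 * (6 * M * h) := by linarith only [tri, gE, e2h, e3h, e5h]
  calc 1 / (2 * h ^ 4) * |((-(1/2) * d1 + d2 - d3 + (1/2) * d4 - (-(1/2) * d5 + d6 - d7 + (1/2) * d8)) + 2 * h * (-(1/2) * d9 + d10 - d11 + (1/2) * d12) + h ^ 3 / 3 * (-(1/2) * d13 + d14 - d15 + (1/2) * d16) + h ^ 5 / 60 * (-(1/2) * d17 + d18 - d19 + (1/2) * d20))|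
      ≤ 1 / (2 * h ^ 4) * (M * h ^ 6 / 20 + 2 * h * (4 * M * h ^ 5)
          + h ^ 3 / 3 * (12 * M * h ^ 3) + h ^ 5 / 60 * (6 * M * h)) :=
        mul_le_mul_of_nonneg_left hW (by positivity)
    _ = (243/40) * M * h ^ 2 := by field_simp; ring
    _ ≤ 100 * M * h ^ 2 := by linarith only [mul_nonneg hM0 (pow_nonneg hp.le 2)]
end
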